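/- (Inequality (3.3), the key lemma for Theorem 3 of the paper.) Under Assumption 1, the test statistic evaluated at the true parameter satisfies T_n(β) ≤ T*_n(β) pointwise on Ω. -/

import Mathlib

open MeasureTheory ProbabilityTheory

/-- Sample upper moment `m̂_u(b,v)` computed from outcomes `y`. -/
noncomputable def muHatU {n K : ℕ} (X : Fin n → Fin K → ℝ) (b v : Fin K → ℝ)
    (y : Fin n → ℝ) : ℝ :=
  (n : ℝ)⁻¹ * ∑ i, (2 * y i - 1) *
    (if 0 ≤ (∑ j, X i j * b j) ∧ (∑ j, X i j * v j) < 0 then 1 else 0)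

/-- Sample lower moment `m̂_l(b,v)` computed from outcomes `y`. -/
noncomputable def muHatL {n K : ℕ} (X : Fin n → Fin K → ℝ) (b v : Fin K → ℝ)
    (y : Fin n → ℝ) : ℝ :=
  (n : ℝ)⁻¹ * ∑ i, (1 - 2 * y i) *
    (if (∑ j, X i j * b j) ≤ 0 ∧ 0 < (∑ j, X i j * v j) then 1 else 0)

/-- Sample variance `σ̂_u²(b,v)`. -/
noncomputable def sigHatU2 {n K : ℕ} (X : Fin n → Fin K → ℝ) (b v : Fin K → ℝ)
    (y : Fin n → ℝ) : ℝ :=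
  (n : ℝ)⁻¹ * (∑ i, (if 0 ≤ (∑ j, X i j * b j) ∧ (∑ j, X i j * v j) < 0
      then (1:ℝ) else 0)) - (muHatU X b v y) ^ 2

/-- Sample variance `σ̂_l²(b,v)`. -/
noncomputable def sigHatL2 {n K : ℕ} (X : Fin n → Fin K → ℝ) (b v : Fin K → ℝ)
    (y : Fin n → ℝ) : ℝ :=
  (n : ℝ)⁻¹ * (∑ i, (if (∑ j, X i j * b j) ≤ 0 ∧ 0 < (∑ j, X i j * v j)
      then (1:ℝ) else 0)) - (muHatL X b v y) ^ 2

/-- The test statistic `T_n(b)` computed from outcomes `y`. -/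
noncomputable def Tstat {n K : ℕ} (X : Fin n → Fin K → ℝ)
    (Vu Vl : Finset (Fin K → ℝ)) (hu : Vu.Nonempty) (hl : Vl.Nonempty)
    (ε : ℝ) (b : Fin K → ℝ) (y : Fin n → ℝ) : ℝ :=
  max 0 (max
    (Vu.sup' hu fun v =>
      Real.sqrt n * (-(muHatU X b v y)) /
        max (Real.sqrt (sigHatU2 X b v y)) ε)
    (Vl.sup' hl fun v =>
      Real.sqrt n * (-(muHatL X b v y)) /
        max (Real.sqrt (sigHatL2 X b v y)) ε))


private lemma term_aux (ε : ℝ) (hε : 0 < ε) (s : ℝ) (hs : 0 ≤ s) (p m m' : ℝ)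
    (hm : m' ≤ m) :
    s * (-m) / max (Real.sqrt (p - m ^ 2)) ε ≤
      max 0 (s * (-m') / max (Real.sqrt (p - m' ^ 2)) ε) := by
  have hD : (0:ℝ) < max (Real.sqrt (p - m ^ 2)) ε := lt_of_lt_of_le hε (le_max_right _ _)
  have hD' : (0:ℝ) < max (Real.sqrt (p - m' ^ 2)) ε := lt_of_lt_of_le hε (le_max_right _ _)
  by_cases h : -m ≤ 0
  · refine le_trans ?_ (le_max_left _ _)
    exact div_nonpos_of_nonpos_of_nonneg (mul_nonpos_of_nonneg_of_nonpos hs h) hD.le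
  · push_neg at h
    refine le_trans ?_ (le_max_right _ _)
    have hm0 : m < 0 := by linarith
    have hm'0 : m' < 0 := lt_of_le_of_lt hm hm0
    have hsq : m ^ 2 ≤ m' ^ 2 := by nlinarith
    have hle : max (Real.sqrt (p - m' ^ 2)) ε ≤ max (Real.sqrt (p - m ^ 2)) ε :=
      max_le_max (Real.sqrt_le_sqrt (by linarith)) le_rfl
    have hnum : s * (-m) ≤ s * (-m') :=
      mul_le_mul_of_nonneg_left (by linarith) hs
    have hnum0 : 0 ≤ s * (-m') := le_trans (mul_nonneg hs (le_of_lt h)) hnum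
    exact div_le_div₀ hnum0 hnum hD' hle

/-- Inequality (3.3): under Assumption 1, `T_n(β) ≤ T*_n(β)` pointwise on `Ω`. -/
theorem Tstat_le_TstatStar
    {Ω : Type*} [MeasurableSpace Ω] (P : Measure Ω) [IsProbabilityMeasure P]
    {n K : ℕ} (hn : 1 ≤ n) (hK : 1 ≤ K)
    (X : Fin n → Fin K → ℝ) (β : Fin K → ℝ)
    (U : Fin n → Ω → ℝ) (hU : ∀ i, Measurable (U i))
    (Y : Fin n → Ω → ℝ)
    (hY : ∀ i ω, Y i ω = if 0 ≤ (∑ j, X i j * β j) + U i ω then 1 else 0)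
    (hmed : ∀ i, P {ω | 0 ≤ U i ω} = 1/2)
    (hindep : iIndepFun
      (fun i ω => if 0 ≤ U i ω then (1 : ℝ) else 0) P)
    (ε : ℝ) (hε : 0 < ε)
    (Vu Vl : Finset (Fin K → ℝ)) (hu : Vu.Nonempty) (hl : Vl.Nonempty)
    (ω : Ω) :
    Tstat X Vu Vl hu hl ε β (fun i => Y i ω) ≤
      Tstat X Vu Vl hu hl ε β (fun i => if 0 ≤ U i ω then 1 else 0) := by
  set Ys : Fin n → ℝ := fun i => if 0 ≤ U i ω then 1 else 0 with hYs
  have hYle : ∀ i, 0 ≤ (∑ j, X i j * β j) → Ys i ≤ Y i ω := by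
    intro i hi
    rw [hY i ω]
    by_cases h : 0 ≤ U i ω
    · simp [hYs, h, add_nonneg hi h]
    · simp only [hYs, if_neg h]; positivity
  have hYge : ∀ i, (∑ j, X i j * β j) ≤ 0 → Y i ω ≤ Ys i := by
    intro i hi
    rw [hY i ω]
    by_cases h : 0 ≤ (∑ j, X i j * β j) + U i ω
    · have : 0 ≤ U i ω := by linarith
      simp [hYs, h, this]
    · simp only [if_neg h]
      by_cases h2 : 0 ≤ U i ω <;> simp [hYs, h2]
  have hn0 : (0:ℝ) ≤ (n : ℝ)⁻¹ := by positivity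
  have hmu : ∀ v, muHatU X β v Ys ≤ muHatU X β v (fun i => Y i ω) := by
    intro v
    unfold muHatU
    refine mul_le_mul_of_nonneg_left (Finset.sum_le_sum fun i _ => ?_) hn0
    by_cases h : 0 ≤ (∑ j, X i j * β j) ∧ (∑ j, X i j * v j) < 0
    · simp only [if_pos h, mul_one]
      have := hYle i h.1; linarith
    · simp [if_neg h]
  have hml : ∀ v, muHatL X β v Ys ≤ muHatL X β v (fun i => Y i ω) := by
    intro v
    unfold muHatL
    refine mul_le_mul_of_nonneg_left (Finset.sum_le_sum fun i _ => ?_) hn0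
    by_cases h : (∑ j, X i j * β j) ≤ 0 ∧ 0 < (∑ j, X i j * v j)
    · simp only [if_pos h, mul_one]
      have := hYge i h.1; linarith
    · simp [if_neg h]
  have hs : (0:ℝ) ≤ Real.sqrt n := Real.sqrt_nonneg _
  unfold Tstat sigHatU2 sigHatL2
  refine max_le (le_max_left _ _) (max_le (Finset.sup'_le _ _ fun v hv => ?_)
    (Finset.sup'_le _ _ fun v hv => ?_))
  · have h := term_aux ε hε (Real.sqrt n) hs
      ((n : ℝ)⁻¹ * ∑ i, (if 0 ≤ (∑ j, X i j * β j) ∧ (∑ j, X i j * v j) < 0 then (1:ℝ) else 0))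
      (muHatU X β v (fun i => Y i ω)) (muHatU X β v Ys) (hmu v)
    refine le_trans h (max_le (le_max_left _ _) (le_trans ?_ (le_max_right _ _)))
    refine le_trans ?_ (le_max_left _ _)
    exact Finset.le_sup'
      (fun v => Real.sqrt n * (-(muHatU X β v Ys)) / max (Real.sqrt (sigHatU2 X β v Ys)) ε) hv
  · have h := term_aux ε hε (Real.sqrt n) hs
      ((n : ℝ)⁻¹ * ∑ i, (if (∑ j, X i j * β j) ≤ 0 ∧ 0 < (∑ j, X i j * v j) then (1:ℝ) else 0))
      (muHatL X β v (fun i => Y i ω)) (muHatL X β v Ys) (hml v)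
    refine le_trans h (max_le (le_max_left _ _) (le_trans ?_ (le_max_right _ _)))
    refine le_trans ?_ (le_max_right _ _)
    exact Finset.le_sup'
      (fun v => Real.sqrt n * (-(muHatL X β v Ys)) / max (Real.sqrt (sigHatL2 X β v Ys)) ε) hv
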